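/- arXiv:1611.04874 — 2 statements merged into one kernel-verified Lean document; each statement's English description precedes it below -/
import Mathlib

section
/- For any α > 0, β ≥ 0 and 0 ≤ λ < β², the integral ∫₀^∞ e^(-2αt) · ((β² - λ)^(-1/2) e^(-βt) sinh((β² - λ)^(1/2) t))² dt equals 1 / (4(α + β)(α² + 2αβ + λ)). -/
open MeasureTheory Set

lemma exp_int_aux (b : ℝ) (hb : 0 < b) :
    ∫ x in Set.Ioi (0:ℝ), Real.exp (-(b*x)) = 1/b := by
  have h := integral_comp_mul_left_Ioi (fun x => Real.exp (-x)) 0 hb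
  simp only [mul_zero] at h
  rw [h, integral_exp_neg_Ioi_zero, smul_eq_mul, mul_one, one_div]

set_option maxHeartbeats 1000000 in
theorem stmt_5 (α β lam : ℝ) (hα : 0 < α) (hβ : 0 ≤ β)
    (hlam0 : 0 ≤ lam) (hlam : lam < β ^ 2) :
    ∫ t in Set.Ioi (0 : ℝ),
      Real.exp (-(2 * α) * t) *
        ((β ^ 2 - lam) ^ (-(1 : ℝ) / 2) * Real.exp (-β * t) *
          Real.sinh ((β ^ 2 - lam) ^ ((1 : ℝ) / 2) * t)) ^ 2
      = 1 / (4 * (α + β) * (α ^ 2 + 2 * α * β + lam)) := by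
  have hc : 0 < β^2 - lam := by linarith
  obtain ⟨γ, hγpos, hγsq⟩ : ∃ γ : ℝ, 0 < γ ∧ lam = β^2 - γ^2 :=
    ⟨Real.sqrt (β^2 - lam), Real.sqrt_pos.mpr hc, by rw [Real.sq_sqrt hc.le]; ring⟩
  subst hγsq
  have hbase : β^2 - (β^2 - γ^2) = γ^2 := by ring
  have hγβ : γ ≤ β := by nlinarith
  have hrpow : (β^2 - (β^2 - γ^2)) ^ ((1:ℝ)/2) = γ := by
    rw [hbase, ← Real.sqrt_eq_rpow, Real.sqrt_sq hγpos.le]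
  have hrpow' : (β^2 - (β^2 - γ^2)) ^ (-(1:ℝ)/2) = γ⁻¹ := by
    rw [neg_div, Real.rpow_neg (by nlinarith), hrpow]
  have key : ∀ t : ℝ,
      Real.exp (-(2 * α) * t) *
        ((β ^ 2 - (β^2 - γ^2)) ^ (-(1 : ℝ) / 2) * Real.exp (-β * t) *
          Real.sinh ((β ^ 2 - (β^2 - γ^2)) ^ ((1 : ℝ) / 2) * t)) ^ 2
      = (4*γ^2)⁻¹ * Real.exp (-((2*α+2*β-2*γ)*t))
        - (2*γ^2)⁻¹ * Real.exp (-((2*α+2*β)*t))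
        + (4*γ^2)⁻¹ * Real.exp (-((2*α+2*β+2*γ)*t)) := by
    intro t
    rw [hrpow, hrpow', Real.sinh_eq]
    rw [show (-(2*α)*t : ℝ) = -(α*t) + -(α*t) by ring]
    rw [show (-β*t : ℝ) = -(β*t) by ring]
    rw [show (-((2*α+2*β-2*γ)*t):ℝ) = (-(α*t) + -(α*t)) + (-(β*t) + -(β*t)) + (γ*t + γ*t) by ring]
    rw [show (-((2*α+2*β)*t):ℝ) = (-(α*t) + -(α*t)) + (-(β*t) + -(β*t)) by ring]
    rw [show (-((2*α+2*β+2*γ)*t):ℝ) = (-(α*t) + -(α*t)) + (-(β*t) + -(β*t)) + (-(γ*t) + -(γ*t)) by ring]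
    simp only [Real.exp_add, Real.exp_neg]
    have hZ : Real.exp (γ*t) ≠ 0 := (Real.exp_pos _).ne'
    field_simp
    ring
  simp_rw [key]
  have ha1 : (0:ℝ) < 2*α+2*β-2*γ := by nlinarith
  have ha2 : (0:ℝ) < 2*α+2*β := by linarith
  have ha3 : (0:ℝ) < 2*α+2*β+2*γ := by linarith
  have i1 : IntegrableOn (fun t => (4*γ^2)⁻¹ * Real.exp (-((2*α+2*β-2*γ)*t))) (Ioi 0) := by
    have h := (exp_neg_integrableOn_Ioi (0:ℝ) ha1).const_mul (4*γ^2)⁻¹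
    simp only [neg_mul] at h
    exact h
  have i2 : IntegrableOn (fun t => (2*γ^2)⁻¹ * Real.exp (-((2*α+2*β)*t))) (Ioi 0) := by
    have h := (exp_neg_integrableOn_Ioi (0:ℝ) ha2).const_mul (2*γ^2)⁻¹
    simp only [neg_mul] at h
    exact h
  have i3 : IntegrableOn (fun t => (4*γ^2)⁻¹ * Real.exp (-((2*α+2*β+2*γ)*t))) (Ioi 0) := by
    have h := (exp_neg_integrableOn_Ioi (0:ℝ) ha3).const_mul (4*γ^2)⁻¹
    simp only [neg_mul] at h
    exact h
  have i12 : IntegrableOn (fun t => (4*γ^2)⁻¹ * Real.exp (-((2*α+2*β-2*γ)*t))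
      - (2*γ^2)⁻¹ * Real.exp (-((2*α+2*β)*t))) (Ioi 0) := i1.sub i2
  rw [integral_add i12 i3, integral_sub i1 i2,
    integral_const_mul, integral_const_mul, integral_const_mul,
    exp_int_aux _ ha1, exp_int_aux _ ha2, exp_int_aux _ ha3]
  have h1 : (2*α+2*β-2*γ) ≠ 0 := ha1.ne'
  have h2 : (2*α+2*β) ≠ 0 := ha2.ne'
  have h3 : (2*α+2*β+2*γ) ≠ 0 := ha3.ne'
  have h4 : α^2 + 2*α*β + (β^2 - γ^2) ≠ 0 := by nlinarith
  have hγ2 : (γ:ℝ)^2 ≠ 0 := by positivity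
  have h1' : α+β-γ ≠ 0 := by linarith
  field_simp
  ring
end

section
/- For β > 0 and t ≥ 0, the supremum over λ ≥ 0 of |V_β(λ,t)| equals β^(-1) e^(-βt) sinh(βt), where V_β(λ,t) = (β²-λ)^(-1/2) e^(-βt) sinh((β²-λ)^(1/2) t) for λ < β², V_β(β²,t) = t e^(-βt), and V_β(λ,t) = (λ-β²)^(-1/2) e^(-βt) sin((λ-β²)^(1/2) t) for λ > β². -/
private lemma key_sinh {s b t : ℝ} (hs : 0 ≤ s) (hsb : s ≤ b) (ht : 0 ≤ t) :
    b * Real.sinh (s * t) ≤ s * Real.sinh (b * t) := by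
  have H : MonotoneOn (fun x => s * Real.sinh (b * x) - b * Real.sinh (s * x)) (Set.Ici 0) := by
    apply monotoneOn_of_deriv_nonneg (convex_Ici 0)
    · fun_prop
    · intro x hx
      have hD : HasDerivAt (fun x => s * Real.sinh (b * x) - b * Real.sinh (s * x))
          (s * (Real.cosh (b * x) * (b * 1)) - b * (Real.cosh (s * x) * (s * 1))) x :=
        (((Real.hasDerivAt_sinh (b * x)).comp x
          ((hasDerivAt_id x).const_mul b)).const_mul s).sub
          (((Real.hasDerivAt_sinh (s * x)).comp x
          ((hasDerivAt_id x).const_mul s)).const_mul b)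
      exact hD.differentiableAt.differentiableWithinAt
    · intro x hx
      rw [interior_Ici] at hx
      have hx0 : (0 : ℝ) < x := hx
      have hD : HasDerivAt (fun x => s * Real.sinh (b * x) - b * Real.sinh (s * x))
          (s * (Real.cosh (b * x) * (b * 1)) - b * (Real.cosh (s * x) * (s * 1))) x :=
        (((Real.hasDerivAt_sinh (b * x)).comp x
          ((hasDerivAt_id x).const_mul b)).const_mul s).sub
          (((Real.hasDerivAt_sinh (s * x)).comp x
          ((hasDerivAt_id x).const_mul s)).const_mul b)
      rw [hD.deriv]
      have hc : Real.cosh (s * x) ≤ Real.cosh (b * x) := by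
        rw [Real.cosh_le_cosh, abs_of_nonneg (mul_nonneg hs hx0.le),
          abs_of_nonneg (mul_nonneg (hs.trans hsb) hx0.le)]
        exact mul_le_mul_of_nonneg_right hsb hx0.le
      nlinarith [mul_nonneg (mul_nonneg hs (hs.trans hsb)) (sub_nonneg.2 hc)]
  have := H Set.self_mem_Ici (Set.mem_Ici.2 ht) ht
  simp only [mul_zero, Real.sinh_zero, sub_zero, sub_self] at this
  linarith

theorem stmt_9 (β t : ℝ) (hβ : 0 < β) (ht : 0 ≤ t)
    (V : ℝ → ℝ)
    (hlt : ∀ lam : ℝ, lam < β ^ 2 → V lam =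
      (β ^ 2 - lam) ^ (-(1 : ℝ) / 2) * Real.exp (-β * t) *
        Real.sinh ((β ^ 2 - lam) ^ ((1 : ℝ) / 2) * t))
    (heq : V (β ^ 2) = t * Real.exp (-β * t))
    (hgt : ∀ lam : ℝ, β ^ 2 < lam → V lam =
      (lam - β ^ 2) ^ (-(1 : ℝ) / 2) * Real.exp (-β * t) *
        Real.sin ((lam - β ^ 2) ^ ((1 : ℝ) / 2) * t)) :
    sSup ((fun lam => |V lam|) '' Set.Ici (0 : ℝ))
      = β⁻¹ * Real.exp (-β * t) * Real.sinh (β * t) := by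
  have hexp : 0 < Real.exp (-β * t) := Real.exp_pos _
  have hsinh : 0 ≤ Real.sinh (β * t) := Real.sinh_nonneg_iff.2 (mul_nonneg hβ.le ht)
  have hM : 0 ≤ β⁻¹ * Real.exp (-β * t) * Real.sinh (β * t) :=
    mul_nonneg (mul_nonneg (inv_nonneg.2 hβ.le) hexp.le) hsinh
  -- βt ≤ sinh(βt)
  have hself : β * t ≤ Real.sinh (β * t) :=
    le_of_not_gt fun h => absurd (Real.sinh_lt_self_iff.1 h)
      (not_lt.2 (mul_nonneg hβ.le ht))
  have hte : t * Real.exp (-β * t) ≤ β⁻¹ * Real.exp (-β * t) * Real.sinh (β * t) := by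
    rw [mul_comm β⁻¹, mul_assoc, mul_comm t]
    apply mul_le_mul_of_nonneg_left _ hexp.le
    rw [le_inv_mul_iff₀ hβ]
    exact hself
  apply IsGreatest.csSup_eq
  constructor
  · -- membership: attained at lam = 0
    refine ⟨0, Set.self_mem_Ici, ?_⟩
    show |V 0| = _
    have h0 : (0 : ℝ) < β ^ 2 := by positivity
    rw [hlt 0 h0, sub_zero]
    have h1 : (β ^ 2 : ℝ) ^ ((1 : ℝ) / 2) = β := by
      rw [← Real.sqrt_eq_rpow, Real.sqrt_sq hβ.le]
    have h2 : (β ^ 2 : ℝ) ^ (-(1 : ℝ) / 2) = β⁻¹ := by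
      rw [neg_div, Real.rpow_neg (by positivity), h1]
    rw [h1, h2, abs_of_nonneg hM]
  · -- upper bound
    rintro y ⟨lam, hlam, rfl⟩
    simp only [Set.mem_Ici] at hlam
    show |V lam| ≤ _
    rcases lt_trichotomy lam (β ^ 2) with hcase | hcase | hcase
    · -- lam < β²
      have hc : (0 : ℝ) < β ^ 2 - lam := by linarith
      set s : ℝ := (β ^ 2 - lam) ^ ((1 : ℝ) / 2) with hsdef
      have hs_sqrt : s = Real.sqrt (β ^ 2 - lam) := (Real.sqrt_eq_rpow _).symm
      have hs0 : 0 < s := Real.rpow_pos_of_pos hc _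
      have hsb : s ≤ β := by
        rw [hs_sqrt]
        calc Real.sqrt (β ^ 2 - lam) ≤ Real.sqrt (β ^ 2) :=
              Real.sqrt_le_sqrt (by linarith)
          _ = β := Real.sqrt_sq hβ.le
      have hinv : (β ^ 2 - lam) ^ (-(1 : ℝ) / 2) = s⁻¹ := by
        rw [neg_div, Real.rpow_neg hc.le]
      rw [hlt lam hcase, hinv]
      have hsinhs : 0 ≤ Real.sinh (s * t) := Real.sinh_nonneg_iff.2 (mul_nonneg hs0.le ht)
      rw [abs_of_nonneg (by positivity)]
      -- need s⁻¹ * exp * sinh(st) ≤ β⁻¹ * exp * sinh(βt)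
      have hkey : β * Real.sinh (s * t) ≤ s * Real.sinh (β * t) := key_sinh hs0.le hsb ht
      rw [mul_right_comm, mul_right_comm β⁻¹]
      apply mul_le_mul_of_nonneg_right _ hexp.le
      rw [inv_mul_eq_div, inv_mul_eq_div, div_le_div_iff₀ hs0 hβ]
      nlinarith [hkey]
    · -- lam = β²
      rw [hcase, heq, abs_of_nonneg (by positivity)]
      exact hte
    · -- lam > β²
      have hc : (0 : ℝ) < lam - β ^ 2 := by linarith
      set u : ℝ := (lam - β ^ 2) ^ ((1 : ℝ) / 2) with hudef
      have hu0 : 0 < u := Real.rpow_pos_of_pos hc _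
      have hinv : (lam - β ^ 2) ^ (-(1 : ℝ) / 2) = u⁻¹ := by
        rw [neg_div, Real.rpow_neg hc.le]
      rw [hgt lam hcase, hinv]
      have habs : |u⁻¹ * Real.exp (-β * t) * Real.sin (u * t)|
          ≤ u⁻¹ * Real.exp (-β * t) * (u * t) := by
        rw [abs_mul, abs_of_nonneg (by positivity : (0:ℝ) ≤ u⁻¹ * Real.exp (-β * t))]
        apply mul_le_mul_of_nonneg_left _ (by positivity)
        calc |Real.sin (u * t)| ≤ |u * t| := Real.abs_sin_le_abs
          _ = u * t := abs_of_nonneg (mul_nonneg hu0.le ht)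
      calc |u⁻¹ * Real.exp (-β * t) * Real.sin (u * t)|
          ≤ u⁻¹ * Real.exp (-β * t) * (u * t) := habs
        _ = t * Real.exp (-β * t) := by field_simp
        _ ≤ β⁻¹ * Real.exp (-β * t) * Real.sinh (β * t) := hte
end
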